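/- Let f_α(x) = (1/(1−α))·log₂[((1−√(1−x²))/2)^α + ((1+√(1−x²))/2)^α] for 0 ≤ x ≤ 1 and α > 0, α ≠ 1. For α ≥ 2, f_α is monotonically nondecreasing on [0,1]. -/

import Mathlib

open Real Set

lemma aux_hasDeriv (α : ℝ) (hα : 2 ≤ α) {u : ℝ} (hu : u ∈ Ioo (0:ℝ) 1) :
    HasDerivAt (fun u : ℝ => ((1 - u) / 2) ^ α + ((1 + u) / 2) ^ α)
      ((-1/2) * α * ((1 - u)/2) ^ (α - 1) + (1/2) * α * ((1 + u)/2) ^ (α - 1)) u := by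
  have h1 : HasDerivAt (fun u : ℝ => (1 - u) / 2) (-1/2) u := by
    have := ((hasDerivAt_const u (1:ℝ)).sub (hasDerivAt_id u)).div_const 2
    simpa using this
  have h2 : HasDerivAt (fun u : ℝ => (1 + u) / 2) (1/2) u := by
    have := ((hasDerivAt_const u (1:ℝ)).add (hasDerivAt_id u)).div_const 2
    simpa using this
  have h1' := h1.rpow_const (p := α) (Or.inr (by linarith))
  have h2' := h2.rpow_const (p := α) (Or.inr (by linarith))
  simpa [mul_comm, mul_assoc, mul_left_comm] using h1'.fun_add h2'

lemma aux_mono (α : ℝ) (hα : 2 ≤ α) :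
    MonotoneOn (fun u : ℝ => ((1 - u) / 2) ^ α + ((1 + u) / 2) ^ α) (Icc (0:ℝ) 1) := by
  have hc : ContinuousOn (fun u : ℝ => ((1 - u) / 2) ^ α + ((1 + u) / 2) ^ α) (Icc 0 1) := by
    apply ContinuousOn.add
    · exact (Continuous.rpow_const (by continuity) (fun x => Or.inr (by linarith))).continuousOn
    · exact (Continuous.rpow_const (by continuity) (fun x => Or.inr (by linarith))).continuousOn
  apply monotoneOn_of_deriv_nonneg (convex_Icc 0 1) hc
  · intro u hu
    rw [interior_Icc] at hu
    exact (aux_hasDeriv α hα hu).differentiableAt.differentiableWithinAt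
  · intro u hu
    rw [interior_Icc] at hu
    rw [(aux_hasDeriv α hα hu).deriv]
    have hle : ((1 - u)/2) ^ (α - 1) ≤ ((1 + u)/2) ^ (α - 1) := by
      apply Real.rpow_le_rpow (by linarith [hu.1, hu.2]) (by linarith [hu.1]) (by linarith)
    nlinarith [hle]

theorem stmt_10 (α : ℝ) (hα : 2 ≤ α) :
    MonotoneOn (fun x : ℝ =>
      (1 / (1 - α)) * Real.logb 2
        (((1 - Real.sqrt (1 - x ^ 2)) / 2) ^ α + ((1 + Real.sqrt (1 - x ^ 2)) / 2) ^ α))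
      (Set.Icc (0 : ℝ) 1) := by
  intro x hx y hy hxy
  simp only
  set sx := Real.sqrt (1 - x ^ 2) with hsx
  set sy := Real.sqrt (1 - y ^ 2) with hsy
  have hx0 := hx.1; have hx1 := hx.2; have hy0 := hy.1; have hy1 := hy.2
  have hsx_mem : sx ∈ Icc (0:ℝ) 1 := by
    constructor
    · exact Real.sqrt_nonneg _
    · exact Real.sqrt_le_one.mpr (by nlinarith)
  have hsy_mem : sy ∈ Icc (0:ℝ) 1 := by
    constructor
    · exact Real.sqrt_nonneg _
    · exact Real.sqrt_le_one.mpr (by nlinarith)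
  have hst : sy ≤ sx := Real.sqrt_le_sqrt (by nlinarith)
  have hg := aux_mono α hα hsy_mem hsx_mem hst
  -- positivity of the arguments
  have hpos : ∀ s : ℝ, s ∈ Icc (0:ℝ) 1 → 0 < ((1 - s)/2) ^ α + ((1 + s)/2) ^ α := by
    intro s hs
    have h1 : (0:ℝ) ≤ ((1 - s)/2) ^ α := Real.rpow_nonneg (by linarith [hs.2]) _
    have h2 : (0:ℝ) < ((1 + s)/2) ^ α := Real.rpow_pos_of_pos (by linarith [hs.1]) _
    linarith
  have hlog : Real.logb 2 (((1 - sy)/2) ^ α + ((1 + sy)/2) ^ α)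
      ≤ Real.logb 2 (((1 - sx)/2) ^ α + ((1 + sx)/2) ^ α) :=
    Real.logb_le_logb_of_le (by norm_num) (hpos sy hsy_mem) hg
  have hneg : (1 : ℝ) / (1 - α) ≤ 0 := by
    apply div_nonpos_of_nonneg_of_nonpos <;> linarith
  exact mul_le_mul_of_nonpos_left hlog hneg
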